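/- If L is a core regular double Stone algebra, then B_+ = Φ_+[L], ordered by inclusion with join ∪, meet ∩, bottom ∅ and top pf(L), is itself a core regular double Stone algebra with pseudocomplement Φ_+(a)* = Φ_+(a*) and dual pseudocomplement Φ_+(a)+ = Φ_+(a+), and Φ_+ : L → B_+ is an isomorphism of core regular double Stone algebras (a bijection preserving ∨, ∧, *, +, 0, 1 and the core element). -/

import Mathlib

class DoubleStoneAlgebra (α : Type*) extends DistribLattice α, BoundedOrder α where
  pstar : α → α
  pplus : α → α
  pstar_spec : ∀ x y : α, y ⊓ x = ⊥ ↔ y ≤ pstar x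
  pplus_spec : ∀ x y : α, y ⊔ x = ⊤ ↔ pplus x ≤ y
  stone : ∀ x : α, pstar x ⊔ pstar (pstar x) = ⊤
  stone_dual : ∀ x : α, pplus x ⊓ pplus (pplus x) = ⊥

class CRDSA (α : Type*) extends DoubleStoneAlgebra α where
  regular : ∀ x y : α, pstar x = pstar y → pplus x = pplus y → x = y
  core_nonempty : ∃ k : α, pstar k = ⊥ ∧ pplus k = ⊤

open DoubleStoneAlgebra

/-- A prime filter of a bounded distributive lattice: a proper, upward-closed subset
closed under meets such that `a ⊔ b ∈ F` implies `a ∈ F` or `b ∈ F`. -/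
structure IsPrimeFilter {L : Type*} [DistribLattice L] [BoundedOrder L] (F : Set L) : Prop where
  top_mem : ⊤ ∈ F
  bot_not_mem : ⊥ ∉ F
  mem_of_le : ∀ a ∈ F, ∀ b : L, a ≤ b → b ∈ F
  inf_mem : ∀ a ∈ F, ∀ b ∈ F, a ⊓ b ∈ F
  prime : ∀ a b : L, a ⊔ b ∈ F → a ∈ F ∨ b ∈ F

/-- `pf L`: the set of prime filters of `L`. -/
def pf (L : Type*) [DistribLattice L] [BoundedOrder L] := {F : Set L // IsPrimeFilter F}

/-- `Φ₊ : L → P(pf L)`, `Φ₊(a) = {x ∈ pf L : a ∈ x}`. -/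
def PhiPlus {L : Type*} [DistribLattice L] [BoundedOrder L] (a : L) : Set (pf L) :=
  {x : pf L | a ∈ x.1}


section Aux
variable {L : Type*} [DistribLattice L] [BoundedOrder L]

lemma exists_primeFilter_sep {a b : L} (h : ¬ a ≤ b) :
    ∃ F : Set L, IsPrimeFilter F ∧ a ∈ F ∧ b ∉ F := by
  have hd : Disjoint ((Order.PFilter.principal a : Order.PFilter L) : Set L)
      ((Order.Ideal.principal b : Order.Ideal L) : Set L) := by
    rw [Set.disjoint_left]
    intro x hx hx'
    exact h (le_trans hx hx')
  obtain ⟨J, hJp, hIJ, hdisj⟩ := DistribLattice.prime_ideal_of_disjoint_filter_ideal hd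
  refine ⟨(J : Set L)ᶜ, ?_, ?_, ?_⟩
  · constructor
    · exact fun hT => Order.Ideal.IsProper.top_notMem (hJp.toIsProper) hT
    · intro hB; exact hB J.bot_mem
    · intro x hx y hxy hy; exact hx (J.lower hxy hy)
    · intro x hx y hy hm
      rcases hJp.mem_or_mem hm with h1 | h1
      exacts [hx h1, hy h1]
    · intro x y hxy
      by_contra hc
      push_neg at hc
      simp only [Set.mem_compl_iff, not_not] at hc
      exact hxy (Order.Ideal.sup_mem hc.1 hc.2)
  · exact fun hJ => Set.disjoint_left.mp hdisj (by simp) hJ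
  · intro hb; exact hb (hIJ (by simp [Order.Ideal.mem_principal]))

lemma PhiPlus_subset_iff {a b : L} : PhiPlus a ⊆ PhiPlus b ↔ a ≤ b := by
  constructor
  · intro hsub
    by_contra h
    obtain ⟨F, hF, haF, hbF⟩ := exists_primeFilter_sep h
    exact hbF (hsub (show (⟨F, hF⟩ : pf L) ∈ PhiPlus a from haF))
  · intro hab x hx
    exact x.2.mem_of_le a hx b hab

lemma PhiPlus_inj : Function.Injective (PhiPlus (L := L)) := fun a b h =>
  le_antisymm (PhiPlus_subset_iff.mp h.le) (PhiPlus_subset_iff.mp h.ge)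

lemma PhiPlus_sup (a b : L) : PhiPlus (a ⊔ b) = PhiPlus a ∪ PhiPlus b := by
  ext x
  constructor
  · exact fun hx => x.2.prime a b hx
  · rintro (hx | hx)
    · exact x.2.mem_of_le a hx _ le_sup_left
    · exact x.2.mem_of_le b hx _ le_sup_right

lemma PhiPlus_inf (a b : L) : PhiPlus (a ⊓ b) = PhiPlus a ∩ PhiPlus b := by
  ext x
  constructor
  · exact fun hx => ⟨x.2.mem_of_le _ hx a inf_le_left, x.2.mem_of_le _ hx b inf_le_right⟩
  · rintro ⟨h1, h2⟩
    exact x.2.inf_mem a h1 b h2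

lemma PhiPlus_bot : PhiPlus (⊥ : L) = (∅ : Set (pf L)) := by
  ext x; simp only [Set.mem_empty_iff_false, iff_false]
  exact x.2.bot_not_mem

lemma PhiPlus_top : PhiPlus (⊤ : L) = (Set.univ : Set (pf L)) := by
  ext x; simpa [PhiPlus] using x.2.top_mem

lemma PhiPlus_eq_empty_iff {a : L} : PhiPlus a = (∅ : Set (pf L)) ↔ a = ⊥ := by
  rw [← PhiPlus_bot]
  exact ⟨fun h => PhiPlus_inj h, fun h => h ▸ rfl⟩

lemma PhiPlus_eq_univ_iff {a : L} : PhiPlus a = (Set.univ : Set (pf L)) ↔ a = ⊤ := by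
  rw [← PhiPlus_top]
  exact ⟨fun h => PhiPlus_inj h, fun h => h ▸ rfl⟩

end Aux

/-- if `L` is a core regular double Stone algebra then
`B₊ = Φ₊[L] ⊆ P(pf L)`, ordered by inclusion with join ∪, meet ∩, bottom ∅ and top
`pf L`, is itself a core regular double Stone algebra, with pseudocomplement
`Φ₊(a)* = Φ₊(a*)` and dual pseudocomplement `Φ₊(a)⁺ = Φ₊(a⁺)`, and
`Φ₊ : L → B₊` is an isomorphism of core regular double Stone algebras: a bijection
onto `B₊` preserving ⊔, ⊓, ⊥, ⊤, the (dual) pseudocomplements and the core element. -/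
theorem PhiPlus_CRDSA_iso (L : Type*) [CRDSA L] :
    -- Φ₊ is a bijection from L onto B₊ = Φ₊[L]
    Function.Injective (PhiPlus (L := L)) ∧
    -- Φ₊ is a bounded lattice homomorphism
    (∀ a b : L, PhiPlus (a ⊔ b) = PhiPlus a ∪ PhiPlus b) ∧
    (∀ a b : L, PhiPlus (a ⊓ b) = PhiPlus a ∩ PhiPlus b) ∧
    PhiPlus (⊥ : L) = (∅ : Set (pf L)) ∧
    PhiPlus (⊤ : L) = (Set.univ : Set (pf L)) ∧
    -- Φ₊(a*) is the pseudocomplement of Φ₊(a) in B₊ and Φ₊(a⁺) its dual pseudocomplement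
    (∀ a b : L, PhiPlus b ∩ PhiPlus a = ∅ ↔ PhiPlus b ⊆ PhiPlus (pstar a)) ∧
    (∀ a b : L, PhiPlus b ∪ PhiPlus a = Set.univ ↔ PhiPlus (pplus a) ⊆ PhiPlus b) ∧
    -- the Stone identities hold in B₊
    (∀ a : L, PhiPlus (pstar a) ∪ PhiPlus (pstar (pstar a)) = Set.univ) ∧
    (∀ a : L, PhiPlus (pplus a) ∩ PhiPlus (pplus (pplus a)) = ∅) ∧
    -- B₊ is regular
    (∀ a b : L, PhiPlus (pstar a) = PhiPlus (pstar b) →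
      PhiPlus (pplus a) = PhiPlus (pplus b) → PhiPlus a = PhiPlus b) ∧
    -- B₊ has nonempty core and Φ₊ preserves the core element
    (∀ k : L, pstar k = ⊥ ∧ pplus k = ⊤ →
      PhiPlus (pstar k) = (∅ : Set (pf L)) ∧ PhiPlus (pplus k) = Set.univ) := by
  refine ⟨PhiPlus_inj, PhiPlus_sup, PhiPlus_inf, PhiPlus_bot, PhiPlus_top, ?_, ?_, ?_, ?_, ?_, ?_⟩
  · intro a b
    rw [← PhiPlus_inf, PhiPlus_eq_empty_iff, PhiPlus_subset_iff]
    exact pstar_spec a b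
  · intro a b
    rw [← PhiPlus_sup, PhiPlus_eq_univ_iff, PhiPlus_subset_iff]
    exact pplus_spec a b
  · intro a
    rw [← PhiPlus_sup, PhiPlus_eq_univ_iff]
    exact stone a
  · intro a
    rw [← PhiPlus_inf, PhiPlus_eq_empty_iff]
    exact stone_dual a
  · intro a b h1 h2
    exact congrArg PhiPlus (CRDSA.regular a b (PhiPlus_inj h1) (PhiPlus_inj h2))
  · rintro k ⟨h1, h2⟩
    rw [h1, h2]
    exact ⟨PhiPlus_bot, PhiPlus_top⟩
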